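/- Let G be an infinite group with identity e and let A be a subset of G such that A = A^{-1} and e ∈ A. Then there exist two thin subsets X and Y of G such that ∆(X ∪ Y) = A. -/

import Mathlib

open Pointwise

/-- The combinatorial derivation `∆(A) = {g ∈ G : gA ∩ A is infinite}`. -/
def combDer {G : Type*} [Group G] (A : Set G) : Set G :=
  {g : G | (g • A ∩ A).Infinite}

/-- A subset `B` of a group `G` is thin if `gB ∩ B` is finite for each `g ≠ 1`. -/
def IsThinSub {G : Type*} [Group G] (B : Set G) : Prop :=
  ∀ g : G, g ≠ 1 → (g • B ∩ B).Finite

namespace CombDerAux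

universe u

variable {G : Type u} [Group G]

/-- `zz ai g s` is `g` if `s = false` and `ai * g` if `s = true`. -/
def zz (ai g : G) (s : Bool) : G := cond s (ai * g) g

/-- The products `z_i * z_j⁻¹` (8 shapes). -/
def ee (ai aj gi gj : G) (c : Bool × Bool × Bool) : G :=
  cond c.1 (zz ai gi c.2.1 * (zz aj gj c.2.2)⁻¹) (zz aj gj c.2.1 * (zz ai gi c.2.2)⁻¹)

/-- Solving `ee ai aj gi gj c = w` for `gi`. -/
def sol (ai aj gj : G) (c : Bool × Bool × Bool) (w : G) : G :=
  cond c.1 (cond c.2.1 ai⁻¹ 1 * (w * zz aj gj c.2.2))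
    (cond c.2.2 ai⁻¹ 1 * (w⁻¹ * zz aj gj c.2.1))

lemma sol_ee (ai aj gi gj : G) (c : Bool × Bool × Bool) :
    sol ai aj gj c (ee ai aj gi gj c) = gi := by
  obtain ⟨side, s, t⟩ := c
  cases side <;> cases s <;> cases t <;> simp [sol, ee, zz] <;> group

lemma eq_sol_of_ee_eq {ai aj gi gj w : G} {c : Bool × Bool × Bool}
    (h : ee ai aj gi gj c = w) : gi = sol ai aj gj c w := by
  rw [← h, sol_ee]

variable {I : Type u} [LinearOrder I]

/-- The freeness condition at step `i`, given previous values `p`. -/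
def Good (a : I → G) (i : I) (p : I → G) (g : G) : Prop :=
  ∀ j, j < i → ∀ c, ee (a i) (a j) g (p j) c ≠ 1 ∧
    ∀ i' j', i' < i → j' < i' → ∀ c',
      ee (a i) (a j) g (p j) c ≠ ee (a i') (a j') (p i') (p j') c'

lemma exists_good [Infinite G] (a : I → G) (i : I) (p : I → G)
    (hsmall : Cardinal.mk (Set.Iio i) < Cardinal.mk G) : ∃ g, Good a i p g := by
  classical
  let C := ULift.{u} (Bool × Bool × Bool)
  let W : Option (Set.Iio i × Set.Iio i × C) → G := fun o =>
    o.elim 1 (fun q => ee (a q.1) (a q.2.1) (p q.1) (p q.2.1) q.2.2.down)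
  let Φ : Set.Iio i × C × Option (Set.Iio i × Set.Iio i × C) → G :=
    fun q => sol (a i) (a q.1) (p q.1) q.2.1.down (W q.2.2)
  have hℵ : Cardinal.aleph0 ≤ Cardinal.mk G := Cardinal.aleph0_le_mk G
  have hC : Cardinal.mk C < Cardinal.mk G :=
    lt_of_lt_of_le (Cardinal.lt_aleph0_of_finite C) hℵ
  have hone : (1 : Cardinal) < Cardinal.mk G :=
    lt_of_lt_of_le Cardinal.one_lt_aleph0 hℵ
  have hprod : ∀ (α β : Type u), Cardinal.mk α < Cardinal.mk G →
      Cardinal.mk β < Cardinal.mk G → Cardinal.mk (α × β) < Cardinal.mk G := by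
    intro α β hα hβ
    rw [Cardinal.mk_prod, Cardinal.lift_id, Cardinal.lift_id]
    exact Cardinal.mul_lt_of_lt hℵ hα hβ
  have hdom : Cardinal.mk (Set.Iio i × C × Option (Set.Iio i × Set.Iio i × C))
      < Cardinal.mk G := by
    apply hprod _ _ hsmall
    apply hprod _ _ hC
    rw [Cardinal.mk_option]
    exact Cardinal.add_lt_of_lt hℵ (hprod _ _ hsmall (hprod _ _ hsmall hC)) hone
  obtain ⟨g, hg⟩ : ∃ g, g ∉ Set.range Φ := by
    by_contra h
    push_neg at h
    have he : Set.range Φ = Set.univ := Set.eq_univ_of_forall h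
    have := Cardinal.mk_range_le (f := Φ)
    rw [he, Cardinal.mk_univ] at this
    exact absurd (lt_of_le_of_lt this hdom) (lt_irrefl _)
  refine ⟨g, fun j hj c => ⟨?_, ?_⟩⟩
  · intro h1
    exact hg ⟨(⟨j, hj⟩, ⟨c⟩, none), (eq_sol_of_ee_eq h1).symm⟩
  · intro i' j' h1 h2 c' h3
    exact hg ⟨(⟨j, hj⟩, ⟨c⟩, some (⟨i', h1⟩, ⟨j', h2.trans h1⟩, ⟨c'⟩)), (eq_sol_of_ee_eq h3).symm⟩

variable [WellFoundedLT I]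

noncomputable def xfun [Infinite G] (a : I → G)
    (hsmall : ∀ i : I, Cardinal.mk (Set.Iio i) < Cardinal.mk G) : I → G :=
  (IsWellFounded.wf (α := I) (r := (· < ·))).fix
    (fun i prev => Classical.choose
      (exists_good a i (fun j => if h : j < i then prev j h else 1) (hsmall i)))

lemma xfun_good [Infinite G] (a : I → G)
    (hsmall : ∀ i : I, Cardinal.mk (Set.Iio i) < Cardinal.mk G) (i : I) :
    Good a i (fun j => if _ : j < i then xfun a hsmall j else 1) (xfun a hsmall i) := by
  have h := WellFounded.fix_eq (IsWellFounded.wf (α := I) (r := (· < ·)))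
    (fun i prev => Classical.choose
      (exists_good a i (fun j => if h : j < i then prev j h else 1) (hsmall i))) i
  conv_lhs => skip
  rw [show xfun a hsmall i = _ from h]
  exact Classical.choose_spec _

lemma xfun_mp [Infinite G] (a : I → G)
    (hsmall : ∀ i : I, Cardinal.mk (Set.Iio i) < Cardinal.mk G) :
    ∀ i j, j < i → ∀ c,
      ee (a i) (a j) (xfun a hsmall i) (xfun a hsmall j) c ≠ 1 ∧
      ∀ i' j', i' < i → j' < i' → ∀ c',
        ee (a i) (a j) (xfun a hsmall i) (xfun a hsmall j) c ≠
          ee (a i') (a j') (xfun a hsmall i') (xfun a hsmall j') c' := by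
  intro i j hj c
  have h := xfun_good a hsmall i j hj c
  simp only [dif_pos hj] at h
  refine ⟨h.1, fun i' j' h1 h2 c' => ?_⟩
  have h3 := h.2 i' j' h1 h2 c'
  simpa only [dif_pos h1, dif_pos (h2.trans h1)] using h3


theorem assembly (A : Set G) (hsymm : A = A⁻¹) (hone : (1 : G) ∈ A)
    (a x : I → G) (ha : ∀ i, a i ∈ A)
    (hfib : ∀ g ∈ A, {i | a i = g}.Infinite)
    (mp : ∀ i j, j < i → ∀ c,
      ee (a i) (a j) (x i) (x j) c ≠ 1 ∧
      ∀ i' j', i' < i → j' < i' → ∀ c',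
        ee (a i) (a j) (x i) (x j) c ≠ ee (a i') (a j') (x i') (x j') c') :
    ∃ X Y : Set G, IsThinSub X ∧ IsThinSub Y ∧ combDer (X ∪ Y) = A := by
  classical
  set z : I → Bool → G := fun i s => zz (a i) (x i) s with hz
  -- injectivity of i ↦ z i s for each fixed s
  have hzinj : ∀ s : Bool, Function.Injective (fun i => z i s) := by
    intro s i j hij
    have hij' : z i s = z j s := hij
    by_contra hne
    rcases lt_or_gt_of_ne hne with h | h
    · refine (mp j i h (true, s, s)).1 ?_
      show z j s * (z i s)⁻¹ = 1
      rw [← hij']; exact mul_inv_cancel _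
    · refine (mp i j h (true, s, s)).1 ?_
      show z i s * (z j s)⁻¹ = 1
      rw [hij']; exact mul_inv_cancel _
  -- uniqueness of the larger index
  have hsrc : ∀ {i j i' j' : I}, j < i → j' < i' → ∀ {c c'},
      ee (a i) (a j) (x i) (x j) c = ee (a i') (a j') (x i') (x j') c' → i = i' := by
    intro i j i' j' hj hj' c c' heq
    by_contra hne
    rcases lt_or_gt_of_ne hne with h | h
    · exact (mp i' j' hj' c').2 i j h hj c heq.symm
    · exact (mp i j hj c).2 i' j' h hj' c' heq
  -- main finiteness lemma
  have hfin : ∀ (g : G) (s t : Bool), (∀ i, g * z i t ≠ z i s) →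
      ((g • Set.range fun i => z i t) ∩ Set.range fun i => z i s).Finite := by
    intro g s t hdiag
    have hS1 : {p : I × I | p.2 < p.1 ∧ g * z p.2 t = z p.1 s}.Subsingleton := by
      rintro ⟨i1, i2⟩ ⟨hp1, hp2⟩ ⟨j1, j2⟩ ⟨hq1, hq2⟩
      have hgp : g = ee (a i1) (a i2) (x i1) (x i2) (true, s, t) := by
        show g = z i1 s * (z i2 t)⁻¹
        rw [← hp2]; group
      have hgq : g = ee (a j1) (a j2) (x j1) (x j2) (true, s, t) := by
        show g = z j1 s * (z j2 t)⁻¹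
        rw [← hq2]; group
      have h1 : i1 = j1 := hsrc hp1 hq1 (hgp.symm.trans hgq)
      have h2 : i2 = j2 := by
        apply hzinj t
        show z i2 t = z j2 t
        have : g * z i2 t = g * z j2 t := by rw [hp2, hq2, h1]
        exact mul_left_cancel this
      simp [h1, h2]
    have hS2 : {p : I × I | p.1 < p.2 ∧ g * z p.2 t = z p.1 s}.Subsingleton := by
      rintro ⟨i1, i2⟩ ⟨hp1, hp2⟩ ⟨j1, j2⟩ ⟨hq1, hq2⟩
      have hgp : g = ee (a i2) (a i1) (x i2) (x i1) (false, s, t) := by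
        show g = z i1 s * (z i2 t)⁻¹
        rw [← hp2]; group
      have hgq : g = ee (a j2) (a j1) (x j2) (x j1) (false, s, t) := by
        show g = z j1 s * (z j2 t)⁻¹
        rw [← hq2]; group
      have h2 : i2 = j2 := hsrc hp1 hq1 (hgp.symm.trans hgq)
      have h1 : i1 = j1 := by
        apply hzinj s
        show z i1 s = z j1 s
        rw [← hp2, ← hq2, h2]
      simp [h1, h2]
    have hsub : {p : I × I | g * z p.2 t = z p.1 s} ⊆
        {p : I × I | p.2 < p.1 ∧ g * z p.2 t = z p.1 s} ∪
        {p : I × I | p.1 < p.2 ∧ g * z p.2 t = z p.1 s} := by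
      rintro ⟨i1, i2⟩ hp
      rcases lt_trichotomy i2 i1 with h | h | h
      · exact Or.inl ⟨h, hp⟩
      · exact absurd (h ▸ hp : g * z i1 t = z i1 s) (hdiag i1)
      · exact Or.inr ⟨h, hp⟩
    have hSfin : {p : I × I | g * z p.2 t = z p.1 s}.Finite :=
      (hS1.finite.union hS2.finite).subset hsub
    refine (hSfin.image fun p => z p.1 s).subset ?_
    rintro u ⟨hu1, i, hi⟩
    have hi' : z i s = u := hi
    obtain ⟨v, ⟨j, hj⟩, hv⟩ := hu1
    have hj' : z j t = v := hj
    have hv' : g * v = u := hv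
    refine ⟨(i, j), ?_, hi⟩
    show g * z j t = z i s
    rw [hj', hv', hi']
  refine ⟨Set.range fun i => z i false, Set.range fun i => z i true, ?_, ?_, ?_⟩
  · intro g hg
    exact hfin g false false fun i h => hg (mul_eq_right.1 h)
  · intro g hg
    exact hfin g true true fun i h => hg (mul_eq_right.1 h)
  · ext g
    simp only [combDer, Set.mem_setOf_eq]
    constructor
    · intro hinf
      by_contra hgA
      have hg1 : g ≠ 1 := fun h => hgA (h ▸ hone)
      have hgi : (g : G)⁻¹ ∉ A := by
        intro h
        exact hgA (by rw [hsymm]; exact Set.mem_inv.mpr (by simpa using h))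
      have h00 := hfin g false false fun i h => hg1 (mul_eq_right.1 h)
      have h11 := hfin g true true fun i h => hg1 (mul_eq_right.1 h)
      have h10 := hfin g true false fun i h => by
        -- g * x i = a i * x i → g = a i ∈ A
        have : g = a i := mul_right_cancel (h.trans rfl)
        exact hgA (this ▸ ha i)
      have h01 := hfin g false true fun i h => by
        -- g * (a i * x i) = x i → g⁻¹ = a i ∈ A
        have h2 : a i * x i = g⁻¹ * x i := by
          rw [eq_inv_mul_iff_mul_eq]
          exact h
        have : a i = g⁻¹ := mul_right_cancel h2
        exact hgi (this ▸ ha i)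
      apply Set.not_infinite.2 ?_ hinf
      have hU : g • ((Set.range fun i => z i false) ∪ Set.range fun i => z i true) =
          (g • Set.range fun i => z i false) ∪ g • Set.range fun i => z i true :=
        Set.smul_set_union
      refine ((((h00.union h10).union h01).union h11).subset ?_)
      rw [hU]
      rintro u ⟨hu1 | hu1, hu2 | hu2⟩
      · exact Or.inl (Or.inl (Or.inl ⟨hu1, hu2⟩))
      · exact Or.inl (Or.inl (Or.inr ⟨hu1, hu2⟩))
      · exact Or.inl (Or.inr ⟨hu1, hu2⟩)
      · exact Or.inr ⟨hu1, hu2⟩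
    · intro hgA
      have hM : ((fun i => z i true) '' {i | a i = g}).Infinite :=
        (hfib g hgA).image ((hzinj true).injOn)
      refine hM.mono ?_
      rintro u ⟨i, hai, rfl⟩
      constructor
      · rw [Set.smul_set_union]
        refine Set.mem_union_left _ ⟨x i, ⟨i, rfl⟩, ?_⟩
        show g • x i = z i true
        rw [smul_eq_mul, ← hai]
        rfl
      · exact Set.mem_union_right _ ⟨i, rfl⟩
  

theorem exists_index_and_label {G : Type u} [Group G] [Infinite G] (A : Set G)
    (hone : (1 : G) ∈ A) :
    ∃ (I : Type u) (_ : LinearOrder I) (_ : WellFoundedLT I) (a : I → G),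
      (∀ i : I, Cardinal.mk (Set.Iio i) < Cardinal.mk G) ∧ (∀ i, a i ∈ A) ∧
      (∀ g ∈ A, {i | a i = g}.Infinite) := by
  classical
  refine ⟨(Cardinal.mk G).ord.ToType, inferInstance, inferInstance, ?_⟩
  have hIcard : Cardinal.mk (Cardinal.mk G).ord.ToType = Cardinal.mk G := by
    rw [Cardinal.mk_toType, Cardinal.card_ord]
  have hle : Cardinal.mk (A × ℕ) ≤ Cardinal.mk (Cardinal.mk G).ord.ToType := by
    rw [hIcard, Cardinal.mk_prod, Cardinal.mk_nat, Cardinal.lift_aleph0, Cardinal.lift_uzero]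
    calc Cardinal.mk A * Cardinal.aleph0
        ≤ max (max (Cardinal.mk A) Cardinal.aleph0) Cardinal.aleph0 := Cardinal.mul_le_max _ _
      _ ≤ Cardinal.mk G := by
          simp only [max_le_iff]
          exact ⟨⟨Cardinal.mk_set_le A, Cardinal.aleph0_le_mk G⟩, Cardinal.aleph0_le_mk G⟩
  obtain ⟨emb⟩ := (Cardinal.le_def _ _).1 hle
  refine ⟨fun i => if h : ∃ p : A × ℕ, emb p = i then ((Classical.choose h).1 : G) else 1,
    fun i => Cardinal.mk_Iio_ord_toType i, ?_, ?_⟩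
  · intro i
    show (if h : ∃ p : A × ℕ, emb p = i then ((Classical.choose h).1 : G) else 1) ∈ A
    split_ifs with h
    · exact (Classical.choose h).1.2
    · exact hone
  · intro g hg
    apply Set.infinite_of_injective_forall_mem
      (f := fun n : ℕ => emb (⟨⟨g, hg⟩, n⟩ : A × ℕ))
    · intro m n hmn
      have := emb.injective hmn
      simpa using this
    · intro n
      have hex : ∃ p : A × ℕ, emb p = emb (⟨⟨g, hg⟩, n⟩ : A × ℕ) := ⟨_, rfl⟩
      have h2 : Classical.choose hex = (⟨⟨g, hg⟩, n⟩ : A × ℕ) :=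
        emb.injective (Classical.choose_spec hex)
      show (if h : ∃ p : A × ℕ, emb p = emb (⟨⟨g, hg⟩, n⟩ : A × ℕ) then
        ((Classical.choose h).1 : G) else 1) = g
      rw [dif_pos hex, h2]


end CombDerAux

/-- If `A` is a symmetric subset of an infinite group `G` containing the identity,
then `A = ∆(X ∪ Y)` for some thin subsets `X`, `Y` of `G`. -/
theorem symm_set_eq_combDer_union_of_thin
    {G : Type*} [Group G] [Infinite G] (A : Set G)
    (hsymm : A = A⁻¹) (hone : (1 : G) ∈ A) :
    ∃ X Y : Set G, IsThinSub X ∧ IsThinSub Y ∧ combDer (X ∪ Y) = A := by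
  obtain ⟨I, _, _, a, hsmall, ha, hfib⟩ := CombDerAux.exists_index_and_label A hone
  exact CombDerAux.assembly A hsymm hone a (CombDerAux.xfun a hsmall) ha hfib
    (CombDerAux.xfun_mp a hsmall)
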